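/- Let c ≥ 1, R = ℤ[ν]/(2^c·ν, ν² + 2ν), and suppose there exists a sequence of elements (γ_i)_{i≥0} in R with γ_0 = 1 such that Σ_i γ_i t^i = (1 + tν)^(-r) in R[[t]] and γ_i = 0 for all i > n - r. Then 2^(c-i+1) divides C(r+i-1, i) for all i with n-r < i ≤ c. -/

import Mathlib

open Polynomial PowerSeries

private lemma key_div (c : ℕ) (m : ℤ)
    (h : (Ideal.Quotient.mk (Ideal.span
      ({(2 : Polynomial ℤ) ^ c * Polynomial.X, Polynomial.X ^ 2 + 2 * Polynomial.X} :
        Set (Polynomial ℤ))) ((m : Polynomial ℤ) * Polynomial.X)) = 0) :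
    (2 : ℤ) ^ c ∣ m := by
  rw [Ideal.Quotient.eq_zero_iff_mem, Ideal.mem_span_pair] at h
  obtain ⟨a, b, hab⟩ := h
  have h2 := congrArg (Polynomial.eval (-2 : ℤ)) hab
  simp at h2
  refine ⟨a.eval (-2), ?_⟩
  have h3 : (a.eval (-2) * 2 ^ c) * 2 = (2 ^ c * a.eval (-2)) * 2 := by ring
  nlinarith [h2, h3]

theorem stmt_8 (c r n : ℕ) (hc : 1 ≤ c) (hrn : r ≤ n) :
    let R := Polynomial ℤ ⧸ Ideal.span
      ({(2 : Polynomial ℤ) ^ c * Polynomial.X, Polynomial.X ^ 2 + 2 * Polynomial.X} :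
        Set (Polynomial ℤ))
    let ν : R := Ideal.Quotient.mk _ Polynomial.X
    ∀ γ : ℕ → R, γ 0 = 1 →
      (PowerSeries.mk γ) * (1 + PowerSeries.C ν * PowerSeries.X) ^ r = 1 →
      (∀ i, n - r < i → γ i = 0) →
      ∀ i, n - r < i → i ≤ c → 2 ^ (c - i + 1) ∣ (r + i - 1).choose i := by
  intro R ν γ hγ0 hγmul hγ0' i hi hic
  have hi1 : 1 ≤ i := le_trans (Nat.succ_le_succ (Nat.zero_le _)) hi
  rcases Nat.eq_zero_or_pos r with hr | hr
  · subst hr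
    rw [Nat.choose_eq_zero_of_lt (by omega)]
    exact dvd_zero _
  obtain ⟨d, rfl⟩ : ∃ d, r = d + 1 := ⟨r - 1, by omega⟩
  -- ν^2 = -2ν
  have hν2 : ν ^ 2 = -2 * ν := by
    have h : ν ^ 2 + 2 * ν = Ideal.Quotient.mk _ (Polynomial.X ^ 2 + 2 * Polynomial.X) := by
      simp only [ν, map_add, map_mul, map_pow, map_ofNat]
    have h0 : ν ^ 2 + 2 * ν = 0 := by
      rw [h, Ideal.Quotient.eq_zero_iff_mem]
      exact Ideal.subset_span (by simp)
    linear_combination h0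
  -- explicit inverse via rescale of invOneSubPow
  have hδ : (PowerSeries.mk fun j => (-ν) ^ j * ((d + j).choose d : R)) *
      (1 + PowerSeries.C ν * PowerSeries.X) ^ (d + 1) = 1 := by
    have h0 := PowerSeries.mk_add_choose_mul_one_sub_pow_eq_one R d
    have h1 := congrArg (PowerSeries.rescale (-ν)) h0
    rw [map_mul, map_pow, map_one, map_sub, map_one, PowerSeries.rescale_X,
      PowerSeries.rescale_mk] at h1
    have h2 : (1 : PowerSeries R) - PowerSeries.C (-ν) * PowerSeries.X
        = 1 + PowerSeries.C ν * PowerSeries.X := by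
      rw [map_neg]; ring
    rw [h2] at h1
    exact h1
  -- uniqueness of inverse: γ = δ
  have hunique : PowerSeries.mk γ = PowerSeries.mk fun j => (-ν) ^ j * ((d + j).choose d : R) := by
    calc PowerSeries.mk γ
        = PowerSeries.mk γ * ((PowerSeries.mk fun j => (-ν) ^ j * ((d + j).choose d : R)) *
          (1 + PowerSeries.C ν * PowerSeries.X) ^ (d + 1)) := by rw [hδ, mul_one]
      _ = (PowerSeries.mk fun j => (-ν) ^ j * ((d + j).choose d : R)) *
          (PowerSeries.mk γ * (1 + PowerSeries.C ν * PowerSeries.X) ^ (d + 1)) := by ring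
      _ = _ := by rw [hγmul, mul_one]
  have hγi : γ i = (-ν) ^ i * ((d + i).choose d : R) := by
    have h := congrArg (PowerSeries.coeff i) hunique
    simpa using h
  -- ν ^ j = (-2)^(j-1) * ν for j ≥ 1
  have hνpow : ∀ j : ℕ, 1 ≤ j → ν ^ j = (-2 : R) ^ (j - 1) * ν := by
    intro j hj
    induction j with
    | zero => omega
    | succ k ih =>
      rcases Nat.eq_zero_or_pos k with hk | hk
      · subst hk; simp
      · have hk1 : k - 1 + 1 = k := by omega
        calc ν ^ (k + 1) = ν ^ k * ν := pow_succ ν k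
          _ = (-2 : R) ^ (k - 1) * ν * ν := by rw [ih hk]
          _ = (-2 : R) ^ (k - 1) * ν ^ 2 := by ring
          _ = (-2 : R) ^ (k - 1) * (-2 * ν) := by rw [hν2]
          _ = (-2 : R) ^ (k - 1 + 1) * ν := by ring
          _ = (-2 : R) ^ (k + 1 - 1) * ν := by rw [hk1]; norm_num
  -- γ i = 0 gives an integer multiple of ν vanishing
  have h0 : (-1 : R) ^ i * ((-2 : R) ^ (i - 1) * ν) * ((d + i).choose d : R) = 0 := by
    have h := hγ0' i hi
    rw [hγi, neg_pow ν i, hνpow i hi1] at h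
    exact h
  have hm : ((((-1:ℤ)) ^ i * (-2) ^ (i - 1) * ((d + i).choose d : ℤ) : ℤ) : R) * ν = 0 := by
    rw [Int.cast_mul, Int.cast_mul, Int.cast_pow, Int.cast_pow, Int.cast_neg, Int.cast_one,
      Int.cast_neg, Int.cast_ofNat, Int.cast_natCast]
    linear_combination h0
  have hdvd : (2:ℤ) ^ c ∣ (-1:ℤ) ^ i * (-2) ^ (i - 1) * ((d + i).choose d : ℤ) := by
    apply key_div c
    rw [map_mul, map_intCast]
    exact hm
  have hsign : ((-1:ℤ)) ^ i * (-1) ^ (i - 1) = -1 := by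
    rw [← pow_add]
    exact Odd.neg_one_pow ⟨i - 1, by omega⟩
  have hmeq : (-1:ℤ) ^ i * (-2) ^ (i - 1) * ((d + i).choose d : ℤ)
      = -((2:ℤ) ^ (i - 1) * ((d + i).choose d : ℤ)) := by
    rw [neg_pow (2:ℤ)]
    linear_combination ((2:ℤ) ^ (i - 1) * ((d + i).choose d : ℤ)) * hsign
  rw [hmeq, dvd_neg] at hdvd
  have hsplit : (2:ℤ) ^ c = (2:ℤ) ^ (c - i + 1) * (2:ℤ) ^ (i - 1) := by
    rw [← pow_add]; congr 1; omega
  rw [hsplit, mul_comm ((2:ℤ) ^ (i - 1)) _] at hdvd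
  have hdvd2 : (2:ℤ) ^ (c - i + 1) ∣ ((d + i).choose d : ℤ) :=
    (mul_dvd_mul_iff_right (pow_ne_zero (i - 1) (two_ne_zero (α := ℤ)))).mp hdvd
  have hchoose : (d + 1 + i - 1).choose i = (d + i).choose d := by
    have h1 : d + 1 + i - 1 = d + i := by omega
    rw [h1, ← Nat.choose_symm (Nat.le_add_left i d)]
    congr 1
    omega
  rw [hchoose]
  have hfin : ((2:ℕ) ^ (c - i + 1) : ℤ) ∣ ((d + i).choose d : ℤ) := by push_cast; exact hdvd2
  exact_mod_cast hfin
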